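/- For m ≥ 2 and n a positive integer with base m representation n = α_j·m^j + α_{j-1}·m^{j-1} + ... + α_1·m + α_0 (where α_j > 0 and 0 ≤ α_i ≤ m-1 for all i), the number b_m(n) of m-ary partitions of n (partitions where each part is a power of m) equals the j-fold nested sum: b_m(n) = Σ_{k_j=0}^{α_j} Σ_{k_{j-1}=0}^{α_{j-1}+m·k_j} ... Σ_{k_1=0}^{α_1+m·k_2} 1. In particular b_m(n) = 1 when j = 0. -/

import Mathlib

noncomputable def bm (m n : ℕ) : ℕ :=
  Nat.card {f : ℕ →₀ ℕ // ∑ i ∈ f.support, f i * m ^ i = n}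

def nestedSum (m : ℕ) : List ℕ → ℕ
  | [] => 1
  | [a] => a + 1
  | a :: b :: rest => ∑ k ∈ Finset.range (a + 1), nestedSum m ((b + m * k) :: rest)
  termination_by l => l.length
  decreasing_by simp

open Finset

/-- partitions into powers m^i with i < t -/
def PProp (m t n : ℕ) (f : ℕ →₀ ℕ) : Prop :=
  (∀ i, t ≤ i → f i = 0) ∧ ∑ i ∈ Finset.range t, f i * m ^ i = n

noncomputable def PP (m t n : ℕ) : ℕ := Nat.card {f : ℕ →₀ ℕ // PProp m t n f}

lemma PP_finite (m t n : ℕ) (hm : 1 ≤ m) : Finite {f : ℕ →₀ ℕ // PProp m t n f} := by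
  have hb : ∀ (f : {f : ℕ →₀ ℕ // PProp m t n f}) (i : Fin t), f.1 i < n + 1 := by
    intro f i
    have h1 : f.1 i * m ^ (i : ℕ) ≤ n :=
      le_of_le_of_eq (Finset.single_le_sum (f := fun j => f.1 j * m ^ j)
        (fun j _ => Nat.zero_le _) (mem_range.mpr i.2)) f.2.2
    have h2 : f.1 i ≤ f.1 i * m ^ (i : ℕ) :=
      Nat.le_mul_of_pos_right _ (pow_pos (by omega) _)
    omega
  apply Finite.of_injective (f := fun f : {f : ℕ →₀ ℕ // PProp m t n f} =>
    fun i : Fin t => (⟨f.1 i, hb f i⟩ : Fin (n + 1)))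
  intro f g h
  apply Subtype.ext; apply Finsupp.ext; intro i
  rcases lt_or_ge i t with hi | hi
  · have := congrFun h ⟨i, hi⟩
    simpa using congrArg Fin.val this
  · rw [f.2.1 i hi, g.2.1 i hi]

lemma PP_one (m n : ℕ) : PP m 1 n = 1 := by
  rw [PP, Nat.card_eq_one_iff_unique]
  constructor
  · constructor
    intro f g
    apply Subtype.ext; apply Finsupp.ext; intro i
    have hf := f.2.2; have hg := g.2.2
    simp only [Finset.sum_range_one, pow_zero, mul_one] at hf hg
    rcases Nat.eq_zero_or_pos i with rfl | hi
    · rw [hf, hg]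
    · rw [f.2.1 i hi, g.2.1 i hi]
  · refine ⟨⟨Finsupp.single 0 n, fun i hi => ?_, ?_⟩⟩
    · rw [Finsupp.single_apply_eq_zero]; omega
    · simp

lemma PP_succ (m t n : ℕ) (hm : 2 ≤ m) :
    PP m (t + 1) n = ∑ c ∈ Finset.range (n / m ^ t + 1), PP m t (n - c * m ^ t) := by
  have hpow : 0 < m ^ t := pow_pos (by omega) t
  have hbound : ∀ f : {f : ℕ →₀ ℕ // PProp m (t + 1) n f}, f.1 t < n / m ^ t + 1 := by
    intro f
    have h1 : f.1 t * m ^ t ≤ n :=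
      le_of_le_of_eq (Finset.single_le_sum (f := fun j => f.1 j * m ^ j)
        (fun j _ => Nat.zero_le _) (mem_range.mpr (by omega))) f.2.2
    have := (Nat.le_div_iff_mul_le hpow).2 h1
    omega
  have herase1 : ∀ f : {f : ℕ →₀ ℕ // PProp m (t + 1) n f},
      ∀ i, t ≤ i → (Finsupp.erase t f.1) i = 0 := by
    intro f i hi
    rcases eq_or_ne i t with rfl | hne
    · exact Finsupp.erase_same
    · rw [Finsupp.erase_ne hne]; exact f.2.1 i (by omega)
  have herase2 : ∀ f : {f : ℕ →₀ ℕ // PProp m (t + 1) n f},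
      ∑ i ∈ Finset.range t, (Finsupp.erase t f.1) i * m ^ i = n - f.1 t * m ^ t := by
    intro f
    have hs : ∑ i ∈ Finset.range t, (Finsupp.erase t f.1) i * m ^ i
        = ∑ i ∈ Finset.range t, f.1 i * m ^ i := by
      apply Finset.sum_congr rfl
      intro i hi
      rw [Finsupp.erase_ne (by simp at hi; omega)]
    have hf := f.2.2
    rw [Finset.sum_range_succ] at hf
    omega
  have hinv1 : ∀ p : (c : Fin (n / m ^ t + 1)) × {f : ℕ →₀ ℕ // PProp m t (n - c.1 * m ^ t) f},
      ∀ i, t + 1 ≤ i → (p.2.1 + Finsupp.single t p.1.1) i = 0 := by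
    intro p i hi
    rw [Finsupp.add_apply, p.2.2.1 i (by omega), Finsupp.single_apply_eq_zero.2 (by omega)]
    rfl
  have hinv2 : ∀ p : (c : Fin (n / m ^ t + 1)) × {f : ℕ →₀ ℕ // PProp m t (n - c.1 * m ^ t) f},
      ∑ i ∈ Finset.range (t + 1), (p.2.1 + Finsupp.single t p.1.1) i * m ^ i = n := by
    intro p
    have hcm : p.1.1 * m ^ t ≤ n := by
      have hle : p.1.1 ≤ n / m ^ t := by have := p.1.2; omega
      calc p.1.1 * m ^ t ≤ n / m ^ t * m ^ t := Nat.mul_le_mul_right _ hle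
      _ ≤ n := Nat.div_mul_le_self n _
    have hgt : p.2.1 t = 0 := p.2.2.1 t le_rfl
    rw [Finset.sum_range_succ]
    have h1 : ∑ i ∈ Finset.range t, (p.2.1 + Finsupp.single t p.1.1) i * m ^ i
        = ∑ i ∈ Finset.range t, p.2.1 i * m ^ i := by
      apply Finset.sum_congr rfl
      intro i hi
      rw [Finsupp.add_apply, Finsupp.single_apply_eq_zero.2 (by simp at hi; omega), add_zero]
    rw [h1, p.2.2.2, Finsupp.add_apply, hgt, Finsupp.single_eq_same, zero_add]
    omega
  have e : {f : ℕ →₀ ℕ // PProp m (t + 1) n f} ≃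
      (c : Fin (n / m ^ t + 1)) × {f : ℕ →₀ ℕ // PProp m t (n - c.1 * m ^ t) f} :=
    { toFun := fun f => ⟨⟨f.1 t, hbound f⟩, ⟨Finsupp.erase t f.1, herase1 f, herase2 f⟩⟩
      invFun := fun p => ⟨p.2.1 + Finsupp.single t p.1.1, hinv1 p, hinv2 p⟩
      left_inv := by
        rintro ⟨f, hf⟩
        apply Subtype.ext
        apply Finsupp.ext; intro i
        simp only [Finsupp.add_apply]
        rcases eq_or_ne i t with rfl | hne
        · rw [Finsupp.erase_same, Finsupp.single_eq_same, zero_add]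
        · rw [Finsupp.erase_ne hne,
            Finsupp.single_apply_eq_zero.2 (fun h => absurd h hne), add_zero]
      right_inv := by
        rintro ⟨⟨c, hc⟩, ⟨g, hg1, hg2⟩⟩
        have hval : (g + Finsupp.single t c) t = c := by
          rw [Finsupp.add_apply, hg1 t le_rfl, Finsupp.single_eq_same, zero_add]
        refine Sigma.ext (Fin.ext hval) ?_
        refine (Subtype.heq_iff_coe_eq ?_).2 ?_
        · intro x; simp only [hval]
        · apply Finsupp.ext; intro i
          rcases eq_or_ne i t with rfl | hne
          · rw [Finsupp.erase_same, hg1 i le_rfl]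
          · rw [Finsupp.erase_ne hne, Finsupp.add_apply,
              Finsupp.single_apply_eq_zero.2 (fun h => absurd h hne), add_zero] }
  rw [PP, Nat.card_congr e]
  haveI : ∀ c : Fin (n / m ^ t + 1), Finite {f : ℕ →₀ ℕ // PProp m t (n - c.1 * m ^ t) f} :=
    fun _ => PP_finite m t _ (by omega)
  classical
  letI : ∀ c : Fin (n / m ^ t + 1), Fintype {f : ℕ →₀ ℕ // PProp m t (n - c.1 * m ^ t) f} :=
    fun _ => Fintype.ofFinite _
  rw [Nat.card_eq_fintype_card, Fintype.card_sigma,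
    ← Fin.sum_univ_eq_sum_range (fun c => PP m t (n - c * m ^ t))]
  apply Finset.sum_congr rfl
  intro c _
  rw [PP, Nat.card_eq_fintype_card]

lemma digit_sum_lt (m : ℕ) (hm : 2 ≤ m) (β : ℕ → ℕ) :
    ∀ s, (∀ i, i < s → β i < m) → ∑ i ∈ Finset.range s, β i * m ^ i < m ^ s := by
  intro s
  induction s with
  | zero => intro _; simp
  | succ s ih =>
    intro h
    rw [Finset.sum_range_succ]
    have h1 := ih (fun i hi => h i (by omega))
    have h2 : β s * m ^ s + m ^ s ≤ m ^ (s + 1) := by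
      have h3 := Nat.mul_le_mul_right (m ^ s) (show β s + 1 ≤ m by have := h s (by omega); omega)
      rw [add_mul, one_mul] at h3
      calc β s * m ^ s + m ^ s ≤ m * m ^ s := h3
      _ = m ^ (s + 1) := by ring
    omega

lemma range_map_succ (f : ℕ → ℕ) (u : ℕ) :
    (List.range (u + 1)).map f = f 0 :: (List.range u).map (fun i => f (i + 1)) := by
  rw [List.range_succ_eq_map, List.map_cons, List.map_map]
  rfl

lemma PP_eq_nested (m : ℕ) (hm : 2 ≤ m) :
    ∀ t (β : ℕ → ℕ), (∀ i, i < t → β i < m) →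
      PP m (t + 1) (∑ i ∈ Finset.range (t + 1), β i * m ^ i) =
        nestedSum m ((List.range t).map fun i => β (t - i)) := by
  intro t
  induction t with
  | zero =>
    intro β _
    simp only [List.range_zero, List.map_nil]
    rw [PP_one]
    simp [nestedSum]
  | succ t ih =>
    intro β hβ
    set n := ∑ i ∈ Finset.range (t + 2), β i * m ^ i with hn
    have hpow : 0 < m ^ (t + 1) := pow_pos (by omega) _
    have hr : ∑ i ∈ Finset.range (t + 1), β i * m ^ i < m ^ (t + 1) :=
      digit_sum_lt m hm β (t + 1) (fun i hi => hβ i hi)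
    have hsplit : n = ∑ i ∈ Finset.range (t + 1), β i * m ^ i + β (t + 1) * m ^ (t + 1) := by
      rw [hn, Finset.sum_range_succ]
    have hdiv : n / m ^ (t + 1) = β (t + 1) := by
      rw [hsplit, Nat.add_mul_div_right _ _ hpow, Nat.div_eq_of_lt hr, zero_add]
    rw [PP_succ m (t + 1) n hm, hdiv]
    have key : ∀ c ∈ Finset.range (β (t + 1) + 1),
        PP m (t + 1) (n - c * m ^ (t + 1)) =
          nestedSum m ((List.range t).map fun i =>
            (Function.update β t (β t + m * (β (t + 1) - c))) (t - i)) := by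
      intro c hc
      simp only [Finset.mem_range] at hc
      set β' := Function.update β t (β t + m * (β (t + 1) - c)) with hβ'
      have hval : n - c * m ^ (t + 1) = ∑ i ∈ Finset.range (t + 1), β' i * m ^ i := by
        rw [Finset.sum_range_succ]
        have h1 : ∑ i ∈ Finset.range t, β' i * m ^ i = ∑ i ∈ Finset.range t, β i * m ^ i := by
          apply Finset.sum_congr rfl
          intro i hi
          rw [hβ', Function.update_of_ne (by simp at hi; omega)]
        rw [h1, hβ', Function.update_self]
        have h2 : (β t + m * (β (t + 1) - c)) * m ^ t
            = β t * m ^ t + (β (t + 1) - c) * m ^ (t + 1) := by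
          rw [add_mul]
          congr 1
          rw [pow_succ]
          ring
        rw [h2]
        have h3 : (β (t + 1) - c) * m ^ (t + 1) = β (t + 1) * m ^ (t + 1) - c * m ^ (t + 1) :=
          Nat.sub_mul _ _ _
        have h4 : c * m ^ (t + 1) ≤ β (t + 1) * m ^ (t + 1) :=
          Nat.mul_le_mul_right _ (by omega)
        have h5 := hsplit
        rw [Finset.sum_range_succ] at h5
        omega
      rw [hval]
      apply ih
      intro i hi
      rw [hβ', Function.update_of_ne (by omega : i ≠ t)]
      exact hβ i (by omega)
    rw [Finset.sum_congr rfl key]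
    have hrefl : ∑ c ∈ Finset.range (β (t + 1) + 1),
        nestedSum m ((List.range t).map fun i =>
          (Function.update β t (β t + m * (β (t + 1) - c))) (t - i)) =
        ∑ k ∈ Finset.range (β (t + 1) + 1),
        nestedSum m ((List.range t).map fun i =>
          (Function.update β t (β t + m * k)) (t - i)) := by
      rw [← Finset.sum_range_reflect (fun k => nestedSum m ((List.range t).map fun i =>
        (Function.update β t (β t + m * k)) (t - i))) (β (t + 1) + 1)]
      apply Finset.sum_congr rfl
      intro c _
      simp
    rw [hrefl]
    clear key hrefl hdiv hsplit hr hn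
    cases t with
    | zero =>
      rw [range_map_succ (fun i => β (1 - i)) 0]
      simp [nestedSum]
    | succ s =>
      rw [range_map_succ (fun i => β (s + 1 + 1 - i)) (s + 1)]
      simp only [Nat.sub_zero, Nat.succ_sub_succ]
      rw [range_map_succ (fun i => β (s + 1 - i)) s]
      simp only [Nat.sub_zero, Nat.succ_sub_succ]
      rw [nestedSum]
      apply Finset.sum_congr rfl
      intro k _
      congr 1
      rw [range_map_succ (fun i => Function.update β (s + 1) (β (s + 1) + m * k) (s + 1 - i)) s]
      simp only [Nat.sub_zero, Nat.succ_sub_succ, Function.update_self]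
      congr 1
      apply List.map_congr_left
      intro i _
      exact Function.update_of_ne (by omega) _ _

theorem mary_enumeration (m n j : ℕ) (α : ℕ → ℕ) (hm : 2 ≤ m) (hj : 0 < α j) (hd : ∀ i, i ≤ j → α i < m)
    (hn : n = ∑ i ∈ Finset.range (j + 1), α i * m ^ i) :
    bm m n = nestedSum m ((List.range j).map fun i => α (j - i)) ∧
    (j = 0 → bm m n = 1) := by
  have hlt : n < m ^ (j + 1) := by
    rw [hn]
    exact digit_sum_lt m hm α (j + 1) (fun i hi => hd i (by omega))
  have h1 : bm m n = PP m (j + 1) n := by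
    rw [bm, PP]
    apply Nat.card_congr
    apply Equiv.subtypeEquivRight
    intro f
    constructor
    · intro hs
      have hz : ∀ i, j + 1 ≤ i → f i = 0 := by
        intro i hi
        by_contra hne
        have hmem : i ∈ f.support := Finsupp.mem_support_iff.2 hne
        have h2 : f i * m ^ i ≤ n :=
          le_of_le_of_eq (Finset.single_le_sum (f := fun j => f j * m ^ j)
            (fun j _ => Nat.zero_le _) hmem) hs
        have h3 : m ^ (j + 1) ≤ m ^ i := Nat.pow_le_pow_right (by omega) hi
        have h4 : m ^ i ≤ f i * m ^ i := by
          have : 1 ≤ f i := by omega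
          calc m ^ i = 1 * m ^ i := (one_mul _).symm
          _ ≤ f i * m ^ i := Nat.mul_le_mul_right _ this
        omega
      have hsub : f.support ⊆ Finset.range (j + 1) := by
        intro i hi
        rw [Finset.mem_range]
        by_contra h
        exact Finsupp.mem_support_iff.1 hi (hz i (by omega))
      refine ⟨hz, ?_⟩
      rw [← hs]
      exact (Finset.sum_subset hsub (fun i _ hi => by
        rw [Finsupp.notMem_support_iff.1 hi, zero_mul])).symm
    · rintro ⟨hz, hsum⟩
      have hsub : f.support ⊆ Finset.range (j + 1) := by
        intro i hi
        rw [Finset.mem_range]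
        by_contra h
        exact Finsupp.mem_support_iff.1 hi (hz i (by omega))
      rw [← hsum]
      exact Finset.sum_subset hsub (fun i _ hi => by
        rw [Finsupp.notMem_support_iff.1 hi, zero_mul])
  constructor
  · rw [h1, hn]
    exact PP_eq_nested m hm j α (fun i hi => hd i (le_of_lt hi))
  · intro hj0
    subst hj0
    rw [h1, hn]
    have := PP_eq_nested m hm 0 α (fun i hi => by omega)
    simpa [nestedSum] using this
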